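/- Let A and B be unital C*-algebras, let ε_A ∈ A and ε_B ∈ B be grading operators (selfadjoint unitaries), and let φ : A → B be a unital ℂ-algebra homomorphism which is contractive (‖φ(x)‖ ≤ ‖x‖ for all x ∈ A) and preserves the superinvolutions, i.e. φ(ε_A x* ε_A) = ε_B φ(x)* ε_B for all x ∈ A, where * denotes the C*-involution. Then φ is a graded C*-representation: φ(x*) = φ(x)* for all x ∈ A, and φ(ε_A x ε_A) = ε_B φ(x) ε_B for all x ∈ A. (Lemma 1.) -/

import Mathlib

open Complex

/-- If `k` is selfadjoint and `‖k + t‖² ≤ M + t²` for all real `t`, then `k = 0`. -/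
lemma key_selfadjoint_zero {B : Type*} [CStarAlgebra B] (k : B) (hk : IsSelfAdjoint k)
    (M : ℝ) (h : ∀ t : ℝ, ‖k + (t : ℂ) • (1 : B)‖ ^ 2 ≤ M + t ^ 2) : k = 0 := by
  rcases subsingleton_or_nontrivial B with hB | hB
  · exact Subsingleton.elim k 0
  obtain ⟨z, hz, hznorm⟩ := spectrum.exists_nnnorm_eq_spectralRadius (a := k)
  have hzre : z = (z.re : ℂ) := hk.mem_spectrum_eq_re hz
  have hznorm' : ‖z‖ = ‖k‖ := by
    have := hznorm.trans hk.spectralRadius_eq_nnnorm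
    exact_mod_cast congrArg ENNReal.toReal this
  -- it suffices to show z.re = 0
  have hre : z.re = 0 := by
    by_contra hne
    have hpos : 0 < z.re ^ 2 := by positivity
    obtain ⟨n, hn⟩ := exists_nat_gt (M / z.re ^ 2)
    set t : ℝ := z.re * n with ht
    have hmem : z + (t : ℂ) ∈ spectrum ℂ (k + (t : ℂ) • (1 : B)) := by
      have := spectrum.add_singleton_eq k ((t : ℂ))
      rw [Algebra.algebraMap_eq_smul_one] at this
      rw [← this]
      exact Set.add_mem_add hz rfl
    have hle : ‖z + (t : ℂ)‖ ≤ ‖k + (t : ℂ) • (1 : B)‖ :=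
      spectrum.norm_le_norm_of_mem hmem
    have hnormz : ‖z + (t : ℂ)‖ = |z.re| * (1 + n) := by
      rw [hzre, ht]
      rw [show ((z.re : ℂ) + ((z.re * n : ℝ) : ℂ)) = ((z.re * (1 + n) : ℝ) : ℂ) by push_cast; ring]
      rw [Complex.norm_real]
      simp [Real.norm_eq_abs, abs_mul, abs_of_pos (show (0:ℝ) < 1 + (n:ℝ) by positivity)]
    have hb := h t
    have h2 : (|z.re| * (1 + n)) ^ 2 ≤ M + t ^ 2 := by
      calc (|z.re| * (1 + n)) ^ 2 = ‖z + (t : ℂ)‖ ^ 2 := by rw [hnormz]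
        _ ≤ ‖k + (t : ℂ) • (1 : B)‖ ^ 2 := by
            apply pow_le_pow_left₀ (norm_nonneg _) hle
        _ ≤ M + t ^ 2 := hb
    have hsq : (|z.re| * (1 + n)) ^ 2 = z.re ^ 2 * (1 + 2 * n + n ^ 2) := by
      rw [mul_pow, _root_.sq_abs]; ring
    have ht2 : t ^ 2 = z.re ^ 2 * n ^ 2 := by rw [ht]; ring
    rw [hsq, ht2] at h2
    have : z.re ^ 2 * (1 + 2 * n) ≤ M := by nlinarith
    have : M / z.re ^ 2 ≥ 1 + 2 * n := by
      rw [ge_iff_le, le_div_iff₀ hpos]; linarith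
    have : (n : ℝ) ≤ M / z.re ^ 2 := by linarith
    linarith
  have : ‖k‖ = 0 := by
    rw [← hznorm', hzre, hre]
    simp
  exact norm_eq_zero.mp this

/-- A unital contractive algebra homomorphism between C*-algebras maps selfadjoint
elements to selfadjoint elements. -/
lemma map_isSelfAdjoint_of_contractive {A B : Type*} [CStarAlgebra A] [CStarAlgebra B]
    (φ : A →ₐ[ℂ] B) (hcontr : ∀ x : A, ‖φ x‖ ≤ ‖x‖) {a : A} (ha : IsSelfAdjoint a) :
    IsSelfAdjoint (φ a) := by
  rcases subsingleton_or_nontrivial A with hA | hA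
  · have : a = 0 := Subsingleton.elim a 0
    simp [this]
  set b := φ a with hb
  set k := (-(Complex.I) / 2) • (b - star b) with hkdef
  have hk : IsSelfAdjoint k := by
    rw [IsSelfAdjoint, hkdef, star_smul, star_sub, star_star]
    rw [show star (-(Complex.I) / 2) = Complex.I / 2 by simp [Complex.star_def, map_ofNat]]
    module
  have hbound : ∀ t : ℝ, ‖k + (t : ℂ) • (1 : B)‖ ^ 2 ≤ ‖a‖ ^ 2 + t ^ 2 := by
    intro t
    set u : ℂ := (t : ℂ) * Complex.I with hu
    set c := φ (a + u • (1 : A)) with hc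
    have hcb : c = b + u • (1 : B) := by
      rw [hc, map_add, map_smul, map_one]
    have hustar : star u = -u := by
      rw [hu]; simp [Complex.star_def, Complex.conj_ofReal]
    have h1 : k + (t : ℂ) • (1 : B) = (-(Complex.I) / 2) • (c - star c) := by
      rw [hcb, star_add, star_smul, star_one, hustar, hkdef]
      have e1 : (b + u • (1:B)) - (star b + (-u) • (1:B)) = (b - star b) + (2*u) • (1:B) := by
        rw [neg_smul, two_mul, add_smul]; abel
      rw [e1, smul_add, smul_smul]
      congr 1
      rw [show (-(Complex.I)/2) * (2*u) = (t : ℂ) by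
        rw [hu]; linear_combination (-(t : ℂ)) * Complex.I_sq]
    have h2 : ‖k + (t : ℂ) • (1 : B)‖ ≤ ‖c‖ := by
      rw [h1]
      calc ‖(-(Complex.I) / 2) • (c - star c)‖ = (1/2) * ‖c - star c‖ := by
            rw [norm_smul]; norm_num
        _ ≤ (1/2) * (‖c‖ + ‖star c‖) := by gcongr; exact norm_sub_le _ _
        _ = ‖c‖ := by rw [norm_star]; ring
    have h3 : ‖c‖ ≤ ‖a + u • (1 : A)‖ := hcontr _
    have h4 : ‖a + u • (1 : A)‖ ^ 2 ≤ ‖a‖ ^ 2 + t ^ 2 := by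
      have e2 : star (a + u • (1 : A)) * (a + u • (1 : A))
          = a * a + (((t : ℂ) ^ 2) : ℂ) • (1 : A) := by
        have hu2 : u * u = -((t : ℂ) ^ 2) := by
          rw [hu, mul_mul_mul_comm, Complex.I_mul_I]; push_cast; ring
        simp only [star_add, star_smul, star_one, hustar, ha.star_eq, add_mul, mul_add,
          smul_mul_assoc, mul_smul_comm, smul_smul, one_mul, mul_one, neg_smul, neg_mul, hu2]
        rw [smul_add, smul_neg, smul_smul, hu2]
        simp only [neg_smul, neg_neg]
        abel
      have e3 : ‖a + u • (1 : A)‖ ^ 2 = ‖a * a + (((t : ℂ) ^ 2) : ℂ) • (1 : A)‖ := by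
        rw [← e2, CStarRing.norm_star_mul_self, sq]
      rw [e3]
      calc ‖a * a + (((t : ℂ) ^ 2) : ℂ) • (1 : A)‖
          ≤ ‖a * a‖ + ‖(((t : ℂ) ^ 2) : ℂ) • (1 : A)‖ := norm_add_le _ _
        _ ≤ ‖a‖ * ‖a‖ + t ^ 2 := by
            gcongr
            · exact norm_mul_le _ _
            · rw [norm_smul, norm_one, mul_one]
              simp [← Complex.ofReal_pow, Complex.norm_real, _root_.abs_of_nonneg (sq_nonneg t)]
        _ = ‖a‖ ^ 2 + t ^ 2 := by ring
    calc ‖k + (t : ℂ) • (1 : B)‖ ^ 2 ≤ ‖c‖ ^ 2 := by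
          apply pow_le_pow_left₀ (norm_nonneg _) h2
      _ ≤ ‖a + u • (1 : A)‖ ^ 2 := by apply pow_le_pow_left₀ (norm_nonneg _) h3
      _ ≤ ‖a‖ ^ 2 + t ^ 2 := h4
  have hk0 : k = 0 := key_selfadjoint_zero k hk (‖a‖ ^ 2) hbound
  have : b - star b = 0 := by
    rcases smul_eq_zero.mp (hkdef ▸ hk0) with h | h
    · exfalso; apply Complex.I_ne_zero; field_simp at h; simpa using h
    · exact h
  exact (sub_eq_zero.mp this).symm



/-- **Lemma 1.** Let `A` and `B` be unital C*-algebras, let `εA ∈ A` and `εB ∈ B` be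
grading operators (selfadjoint unitaries), and let `φ : A → B` be a unital contractive
algebra homomorphism preserving the superinvolutions `x ↦ ε x* ε`.  Then `φ` is a graded
C*-representation: it preserves the C*-involution and intertwines the gradings. -/
theorem lemma1_contractive_superinvolutive_hom_is_graded
    {A B : Type*} [CStarAlgebra A] [CStarAlgebra B]
    (εA : A) (εB : B)
    (hεA_sa : star εA = εA) (hεA_sq : εA * εA = 1)
    (hεB_sa : star εB = εB) (hεB_sq : εB * εB = 1)
    (φ : A →ₐ[ℂ] B)
    (hcontr : ∀ x : A, ‖φ x‖ ≤ ‖x‖)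
    (hsuper : ∀ x : A, φ (εA * star x * εA) = εB * star (φ x) * εB) :
    (∀ x : A, φ (star x) = star (φ x)) ∧
    (∀ x : A, φ (εA * x * εA) = εB * φ x * εB) := by
  have hstar : ∀ x : A, φ (star x) = star (φ x) := by
    intro x
    obtain ⟨p, hp⟩ : ∃ p : A, p = (2⁻¹ : ℂ) • (x + star x) := ⟨_, rfl⟩
    obtain ⟨q, hq⟩ : ∃ q : A, q = (-(Complex.I) / 2) • (x - star x) := ⟨_, rfl⟩
    have hpsa : IsSelfAdjoint p := by
      rw [IsSelfAdjoint, hp, star_smul, star_add, star_star]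
      rw [show star (2⁻¹ : ℂ) = (2⁻¹ : ℂ) by simp [Complex.star_def, map_ofNat]]
      rw [add_comm]
    have hqsa : IsSelfAdjoint q := by
      rw [IsSelfAdjoint, hq, star_smul, star_sub, star_star]
      rw [show star (-(Complex.I) / 2) = Complex.I / 2 by simp [Complex.star_def, map_ofNat]]
      module
    have hx : x = p + Complex.I • q := by
      rw [hp, hq]
      match_scalars <;>
        first
        | ring1
        | linear_combination (2⁻¹ : ℂ) * Complex.I_sq
        | linear_combination (-(2⁻¹ : ℂ)) * Complex.I_sq
    have hx' : star x = p - Complex.I • q := by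
      rw [hp, hq]
      match_scalars <;>
        first
        | ring1
        | linear_combination (2⁻¹ : ℂ) * Complex.I_sq
        | linear_combination (-(2⁻¹ : ℂ)) * Complex.I_sq
    have hφp : star (φ p) = φ p := map_isSelfAdjoint_of_contractive φ hcontr hpsa
    have hφq : star (φ q) = φ q := map_isSelfAdjoint_of_contractive φ hcontr hqsa
    rw [hx', map_sub, map_smul]
    conv_rhs => rw [hx, map_add, map_smul]
    rw [star_add, star_smul, hφp, hφq, Complex.star_def, Complex.conj_I, neg_smul,
      sub_eq_add_neg]
  refine ⟨hstar, fun x => ?_⟩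
  have h := hsuper (star x)
  rw [star_star, hstar, star_star] at h
  exact h
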